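/- For every N ≥ 1, |Σ_{n=1}^N ε_n| ≤ 2(1 + √2)·N^{1/2}; consequently (1/N)·Σ_{n=1}^N ε_n → 0 as N → ∞, i.e., the sequence (ε_n) is balanced, whatever the choice of the signs σ_k. -/

import Mathlib

open Polynomial Finset Filter

/-- The pair of polynomial sequences `(P_k, Q_k)` defined by `P_0 = Q_0 = X` and
`P_{k+1} = P_k + σ_k x^{2^k} Q_k`, `Q_{k+1} = P_k - σ_k x^{2^k} Q_k`. -/
noncomputable def PQ (σ : ℕ → ℤ) : ℕ → Polynomial ℂ × Polynomial ℂ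
  | 0 => (Polynomial.X, Polynomial.X)
  | k + 1 =>
      ((PQ σ k).1 + Polynomial.C ((σ k : ℂ)) * Polynomial.X ^ 2 ^ k * (PQ σ k).2,
       (PQ σ k).1 - Polynomial.C ((σ k : ℂ)) * Polynomial.X ^ 2 ^ k * (PQ σ k).2)

lemma term_coeff (σ : ℕ → ℤ) (k n : ℕ) :
    (Polynomial.C ((σ k : ℂ)) * Polynomial.X ^ 2 ^ k * (PQ σ k).2).coeff n =
      (σ k : ℂ) * (if 2 ^ k ≤ n then (PQ σ k).2.coeff (n - 2 ^ k) else 0) := by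
  rw [mul_assoc, coeff_C_mul, mul_comm (X ^ 2 ^ k), coeff_mul_X_pow']

lemma PQ_coeff_zero (σ : ℕ → ℤ) (k : ℕ) :
    (PQ σ k).1.coeff 0 = 0 ∧ (PQ σ k).2.coeff 0 = 0 := by
  induction k with
  | zero => simp [PQ]
  | succ k ih =>
    have h := term_coeff σ k 0
    rw [if_neg (Nat.not_le.mpr (pow_pos two_pos k))] at h
    simp only [PQ, coeff_add, coeff_sub, h, mul_zero, add_zero, sub_zero]
    exact ⟨ih.1, ih.1⟩

lemma PQ_coeff_high (σ : ℕ → ℤ) (k : ℕ) :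
    ∀ n, 2 ^ k < n → (PQ σ k).1.coeff n = 0 ∧ (PQ σ k).2.coeff n = 0 := by
  induction k with
  | zero => intro n hn; constructor <;> · simp only [PQ, coeff_X]; rw [if_neg (by omega)]
  | succ k ih =>
    intro n hn
    have h2 : 2 ^ (k+1) = 2 ^ k + 2 ^ k := by ring
    have hQ : (PQ σ k).2.coeff (n - 2 ^ k) = 0 := (ih _ (by omega)).2
    have h := term_coeff σ k n
    rw [if_pos (by omega), hQ, mul_zero] at h
    have hP : (PQ σ k).1.coeff n = 0 := (ih n (by omega)).1
    refine ⟨?_, ?_⟩ <;> simp only [PQ, coeff_add, coeff_sub, hP, h, add_zero, sub_zero, zero_add]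

lemma sum_Icc_coeff (p : Polynomial ℂ) (M : ℕ) (h0 : p.coeff 0 = 0)
    (hh : ∀ n, M < n → p.coeff n = 0) :
    ∑ n ∈ Icc 1 M, p.coeff n = p.eval 1 := by
  have hdeg : p.natDegree ≤ M := natDegree_le_iff_coeff_eq_zero.mpr hh
  rw [eval_eq_sum_range' (Nat.lt_succ_of_le hdeg)]
  have hins : Finset.range (M + 1) = insert 0 (Icc 1 M) := by
    ext x; simp [Nat.lt_succ_iff]; omega
  rw [hins, Finset.sum_insert (by simp)]
  simp [h0]

lemma eval_one_sq (σ : ℕ → ℤ) (hσ : ∀ k, σ k = 1 ∨ σ k = -1) (k : ℕ) :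
    ‖(PQ σ k).1.eval 1‖ ^ 2 + ‖(PQ σ k).2.eval 1‖ ^ 2 = 2 ^ (k + 1) := by
  induction k with
  | zero => simp [PQ]; norm_num
  | succ k ih =>
    have hb : ‖(σ k : ℂ) * (PQ σ k).2.eval 1‖ = ‖(PQ σ k).2.eval 1‖ := by
      rcases hσ k with h | h <;> simp [h]
    simp only [PQ, eval_add, eval_sub, eval_mul, eval_pow, eval_X, eval_C, one_pow, mul_one]
    have hpl := parallelogram_law_with_norm ℝ ((PQ σ k).1.eval 1) ((σ k : ℂ) * (PQ σ k).2.eval 1)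
    simp only [← sq, hb] at hpl
    rw [hpl, ih]; ring

lemma sqrt_arith (a m : ℝ) (ha : 0 ≤ a) (hm : 0 ≤ m) (hma : m ≤ a) :
    Real.sqrt (2 * a) + (2 + Real.sqrt 2) * Real.sqrt m ≤
      (2 + Real.sqrt 2) * Real.sqrt (a + m) := by
  have h2 : (0:ℝ) ≤ 2 := by norm_num
  set s2 := Real.sqrt 2 with hs2
  set sa := Real.sqrt a with hsa
  set sm := Real.sqrt m with hsm
  set sam := Real.sqrt (a + m) with hsam
  have hs2sq : s2 ^ 2 = 2 := Real.sq_sqrt h2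
  have hsasq : sa ^ 2 = a := Real.sq_sqrt ha
  have hsmsq : sm ^ 2 = m := Real.sq_sqrt hm
  have hsamsq : sam ^ 2 = a + m := Real.sq_sqrt (by linarith)
  have h0s2 : 0 ≤ s2 := Real.sqrt_nonneg _
  have h0sa : 0 ≤ sa := Real.sqrt_nonneg _
  have h0sm : 0 ≤ sm := Real.sqrt_nonneg _
  have h0sam : 0 ≤ sam := Real.sqrt_nonneg _
  have hmono : sm ≤ sa := Real.sqrt_le_sqrt hma
  have hmul : Real.sqrt (2 * a) = s2 * sa := Real.sqrt_mul h2 a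
  rw [hmul]
  have hL : 0 ≤ s2 * sa + (2 + s2) * sm := by positivity
  have hR : 0 ≤ (2 + s2) * sam := by positivity
  have h' : sam ^ 2 = sa ^ 2 + sm ^ 2 := by rw [hsamsq, hsasq, hsmsq]
  have hdiff : ((2 + s2) * sam) ^ 2 - (s2 * sa + (2 + s2) * sm) ^ 2
      = (4 + 4 * s2) * (sa * (sa - sm)) := by
    linear_combination (2 + s2) ^ 2 * h' - 2 * sa * sm * hs2sq
  have hnn : 0 ≤ (4 + 4 * s2) * (sa * (sa - sm)) :=
    mul_nonneg (by linarith) (mul_nonneg h0sa (sub_nonneg.mpr hmono))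
  have key : (s2 * sa + (2 + s2) * sm) ^ 2 ≤ ((2 + s2) * sam) ^ 2 := by linarith
  have := Real.sqrt_le_sqrt key
  rwa [Real.sqrt_sq hL, Real.sqrt_sq hR] at this

lemma icc_split (f : ℕ → ℂ) (a m : ℕ) :
    ∑ n ∈ Icc 1 (a + m), f n = ∑ n ∈ Icc 1 a, f n + ∑ j ∈ Icc 1 m, f (a + j) := by
  have h1 : ∀ b : ℕ, Icc 1 b = Ioc 0 b := fun b => by ext x; simp; omega
  rw [h1, h1, h1]
  rw [← Finset.sum_Ioc_consecutive f (Nat.zero_le a) (Nat.le_add_right a m)]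
  congr 1
  rw [show Ioc a (a + m) = (Ioc 0 m).map (addLeftEmbedding a) by
    rw [Finset.map_add_left_Ioc]; simp, Finset.sum_map]
  rfl

/-- Whatever the choice of the signs `σ_k`, the coefficient sequence `ε` is balanced:
`|∑_{n=1}^N ε_n| ≤ 2(1+√2)√N`, and hence the averages `(1/N)∑_{n=1}^N ε_n` tend to `0`. -/
theorem stmt5 (σ : ℕ → ℤ) (hσ : ∀ k, σ k = 1 ∨ σ k = -1) (ε : ℕ → ℂ)
    (hε : ∀ n k : ℕ, 1 ≤ n → n ≤ 2 ^ k → ε n = (PQ σ k).1.coeff n) :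
    (∀ N : ℕ, 1 ≤ N →
      ‖∑ n ∈ Finset.Icc 1 N, ε n‖ ≤ 2 * (1 + Real.sqrt 2) * Real.sqrt N) ∧
    Tendsto (fun N : ℕ => (1 / (N : ℂ)) * ∑ n ∈ Finset.Icc 1 N, ε n)
      atTop (nhds 0) := by
  have hs2 : (0:ℝ) ≤ Real.sqrt 2 := Real.sqrt_nonneg 2
  -- low coefficients of Q_{k+1} agree with ε
  have hQlow : ∀ k n, 1 ≤ n → n ≤ 2 ^ k → (PQ σ (k+1)).2.coeff n = ε n := by
    intro k n h1 h2
    have ht := term_coeff σ k n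
    have ht0 : (Polynomial.C ((σ k : ℂ)) * Polynomial.X ^ 2 ^ k * (PQ σ k).2).coeff n = 0 := by
      by_cases hc : 2 ^ k ≤ n
      · have hz : n - 2 ^ k = 0 := by omega
        rw [ht, if_pos hc, hz, (PQ_coeff_zero σ k).2, mul_zero]
      · rw [ht, if_neg hc, mul_zero]
    have : (PQ σ (k+1)).2.coeff n = (PQ σ k).1.coeff n := by
      simp only [PQ, coeff_sub, ht0, sub_zero]
    rw [this, ← hε n k h1 h2]
  -- high coefficients
  have hPhigh : ∀ k j, 1 ≤ j → j ≤ 2 ^ k →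
      (PQ σ (k+1)).1.coeff (2 ^ k + j) = (σ k : ℂ) * (PQ σ k).2.coeff j := by
    intro k j h1 h2
    have ht := term_coeff σ k (2 ^ k + j)
    rw [if_pos (Nat.le_add_right _ _), Nat.add_sub_cancel_left] at ht
    have hP0 : (PQ σ k).1.coeff (2 ^ k + j) = 0 := (PQ_coeff_high σ k _ (by omega)).1
    simp only [PQ, coeff_add, ht, hP0, zero_add]
  have hQhigh : ∀ k j, 1 ≤ j → j ≤ 2 ^ k →
      (PQ σ (k+1)).2.coeff (2 ^ k + j) = -((σ k : ℂ) * (PQ σ k).2.coeff j) := by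
    intro k j h1 h2
    have ht := term_coeff σ k (2 ^ k + j)
    rw [if_pos (Nat.le_add_right _ _), Nat.add_sub_cancel_left] at ht
    have hP0 : (PQ σ k).1.coeff (2 ^ k + j) = 0 := (PQ_coeff_high σ k _ (by omega)).1
    simp only [PQ, coeff_sub, ht, hP0, zero_sub]
  -- partial sums up to 2^k equal evaluation at 1
  have hS2k : ∀ k, ∑ n ∈ Icc 1 (2 ^ k), ε n = (PQ σ k).1.eval 1 := by
    intro k
    rw [Finset.sum_congr rfl fun n hn =>
      hε n k (Finset.mem_Icc.mp hn).1 (Finset.mem_Icc.mp hn).2]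
    exact sum_Icc_coeff _ _ (PQ_coeff_zero σ k).1 fun n hn => (PQ_coeff_high σ k n hn).1
  have hPb : ∀ k, ‖(PQ σ k).1.eval 1‖ ≤ Real.sqrt (2 * ((2 ^ k : ℕ) : ℝ)) := by
    intro k
    have h := eval_one_sq σ hσ k
    have hle : ‖(PQ σ k).1.eval 1‖ ^ 2 ≤ 2 * ((2 ^ k : ℕ) : ℝ) := by
      push_cast
      have h2 : (2:ℝ) ^ (k+1) = 2 * 2 ^ k := by ring
      nlinarith [sq_nonneg ‖(PQ σ k).2.eval 1‖, h2]
    calc ‖(PQ σ k).1.eval 1‖ = Real.sqrt (‖(PQ σ k).1.eval 1‖ ^ 2) :=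
          (Real.sqrt_sq (norm_nonneg _)).symm
      _ ≤ _ := Real.sqrt_le_sqrt hle
  have hσn : ∀ k, ‖(σ k : ℂ)‖ = 1 := by
    intro k; rcases hσ k with h | h <;> simp [h]
  -- main induction
  have key : ∀ k N, 1 ≤ N → N ≤ 2 ^ k →
      ‖∑ n ∈ Icc 1 N, ε n‖ ≤ (2 + Real.sqrt 2) * Real.sqrt N ∧
      ‖∑ n ∈ Icc 1 N, (PQ σ k).2.coeff n‖ ≤ (2 + Real.sqrt 2) * Real.sqrt N := by
    intro k
    induction k with
    | zero =>
      intro N h1 h2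
      have hN : N = 1 := by omega
      subst hN
      have hε1 : ε 1 = 1 := by
        rw [hε 1 0 le_rfl (by norm_num)]; simp [PQ]
      have hQ1 : (PQ σ 0).2.coeff 1 = 1 := by simp [PQ]
      simp only [Finset.Icc_self, Finset.sum_singleton, hε1, hQ1, norm_one]
      constructor <;> · rw [Nat.cast_one, Real.sqrt_one, mul_one]; linarith
    | succ k ih =>
      intro N h1 h2
      have hpow : 2 ^ (k+1) = 2 ^ k + 2 ^ k := by ring
      by_cases hN : N ≤ 2 ^ k
      · refine ⟨(ih N h1 hN).1, ?_⟩
        have heq : ∑ n ∈ Icc 1 N, (PQ σ (k+1)).2.coeff n = ∑ n ∈ Icc 1 N, ε n :=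
          Finset.sum_congr rfl fun n hn =>
            hQlow k n (Finset.mem_Icc.mp hn).1 (le_trans (Finset.mem_Icc.mp hn).2 hN)
        rw [heq]; exact (ih N h1 hN).1
      · push_neg at hN
        set m := N - 2 ^ k with hm
        have hm1 : 1 ≤ m := by omega
        have hm2 : m ≤ 2 ^ k := by omega
        have hNm : N = 2 ^ k + m := by omega
        obtain ⟨-, TQ⟩ := ih m hm1 hm2
        have hcast : (N : ℝ) = ((2 ^ k : ℕ) : ℝ) + (m : ℝ) := by rw [hNm]; push_cast; ring
        have harith := sqrt_arith ((2 ^ k : ℕ) : ℝ) (m : ℝ) (by positivity) (by positivity)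
          (by exact_mod_cast hm2)
        -- first component
        have hhiP : ∑ j ∈ Icc 1 m, ε (2 ^ k + j)
            = (σ k : ℂ) * ∑ j ∈ Icc 1 m, (PQ σ k).2.coeff j := by
          rw [Finset.mul_sum]
          refine Finset.sum_congr rfl fun j hj => ?_
          have hj1 := (Finset.mem_Icc.mp hj).1
          have hj2 := (Finset.mem_Icc.mp hj).2
          rw [hε (2 ^ k + j) (k+1) (by omega) (by omega)]
          exact hPhigh k j hj1 (le_trans hj2 hm2)
        have hhiQ : ∑ j ∈ Icc 1 m, (PQ σ (k+1)).2.coeff (2 ^ k + j)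
            = -((σ k : ℂ) * ∑ j ∈ Icc 1 m, (PQ σ k).2.coeff j) := by
          rw [Finset.mul_sum, ← Finset.sum_neg_distrib]
          refine Finset.sum_congr rfl fun j hj => ?_
          have hj1 := (Finset.mem_Icc.mp hj).1
          have hj2 := (Finset.mem_Icc.mp hj).2
          exact hQhigh k j hj1 (le_trans hj2 hm2)
        have hQ2klow : ∑ n ∈ Icc 1 (2 ^ k), (PQ σ (k+1)).2.coeff n
            = ∑ n ∈ Icc 1 (2 ^ k), ε n :=
          Finset.sum_congr rfl fun n hn =>
            hQlow k n (Finset.mem_Icc.mp hn).1 (Finset.mem_Icc.mp hn).2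
        have hTnorm : ‖(σ k : ℂ) * ∑ j ∈ Icc 1 m, (PQ σ k).2.coeff j‖
            ≤ (2 + Real.sqrt 2) * Real.sqrt m := by
          rw [norm_mul, hσn k, one_mul]; exact TQ
        have hbound : ∀ x : ℂ, x = (σ k : ℂ) * ∑ j ∈ Icc 1 m, (PQ σ k).2.coeff j ∨
            x = -((σ k : ℂ) * ∑ j ∈ Icc 1 m, (PQ σ k).2.coeff j) →
            ‖∑ n ∈ Icc 1 (2 ^ k), ε n + x‖ ≤ (2 + Real.sqrt 2) * Real.sqrt ((2 ^ k + m : ℕ) : ℝ) := by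
          intro x hx
          have hxn : ‖x‖ ≤ (2 + Real.sqrt 2) * Real.sqrt m := by
            rcases hx with h | h
            · rw [h]; exact hTnorm
            · rw [h, norm_neg]; exact hTnorm
          calc ‖∑ n ∈ Icc 1 (2 ^ k), ε n + x‖
              ≤ ‖∑ n ∈ Icc 1 (2 ^ k), ε n‖ + ‖x‖ := norm_add_le _ _
            _ ≤ Real.sqrt (2 * ((2 ^ k : ℕ) : ℝ)) + (2 + Real.sqrt 2) * Real.sqrt m := by
                rw [hS2k k]; exact add_le_add (hPb k) hxn
            _ ≤ (2 + Real.sqrt 2) * Real.sqrt (((2 ^ k : ℕ) : ℝ) + (m : ℝ)) := harith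
            _ = (2 + Real.sqrt 2) * Real.sqrt ((2 ^ k + m : ℕ) : ℝ) := by
                congr 1
                push_cast
                ring
        constructor
        · rw [hNm, icc_split ε (2 ^ k) m, hhiP]
          exact hbound _ (Or.inl rfl)
        · rw [hNm, icc_split ((PQ σ (k+1)).2.coeff ·) (2 ^ k) m, hhiQ, hQ2klow]
          exact hbound _ (Or.inr rfl)
  -- conclusion, part 1
  have part1 : ∀ N : ℕ, 1 ≤ N →
      ‖∑ n ∈ Finset.Icc 1 N, ε n‖ ≤ 2 * (1 + Real.sqrt 2) * Real.sqrt N := by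
    intro N hN
    have h2N : N ≤ 2 ^ N := Nat.le_of_lt (Nat.lt_two_pow_self (n := N))
    have h := (key N N hN h2N).1
    calc ‖∑ n ∈ Finset.Icc 1 N, ε n‖ ≤ (2 + Real.sqrt 2) * Real.sqrt N := h
      _ ≤ 2 * (1 + Real.sqrt 2) * Real.sqrt N := by
          apply mul_le_mul_of_nonneg_right _ (Real.sqrt_nonneg _)
          linarith
  refine ⟨part1, ?_⟩
  -- tendsto part
  have hsqrtTop : Tendsto (fun N : ℕ => Real.sqrt N) atTop atTop := by
    have h1 : Tendsto Real.sqrt atTop atTop := by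
      rw [tendsto_atTop_atTop]
      intro b
      refine ⟨b ^ 2, fun a ha => ?_⟩
      calc b ≤ |b| := le_abs_self b
        _ = Real.sqrt (b ^ 2) := (Real.sqrt_sq_eq_abs b).symm
        _ ≤ Real.sqrt a := Real.sqrt_le_sqrt ha
    exact h1.comp tendsto_natCast_atTop_atTop
  have hg : Tendsto (fun N : ℕ => 2 * (1 + Real.sqrt 2) / Real.sqrt N) atTop (nhds 0) :=
    tendsto_const_nhds.div_atTop hsqrtTop
  apply squeeze_zero_norm _ hg
  intro N
  rcases Nat.eq_zero_or_pos N with h0 | h1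
  · subst h0
    simp
  · have hb := part1 N h1
    have hNpos : (0:ℝ) < (N : ℝ) := by exact_mod_cast h1
    have hsqrtpos : 0 < Real.sqrt N := Real.sqrt_pos.mpr hNpos
    rw [norm_mul, norm_div, norm_one, Complex.norm_natCast]
    calc 1 / (N : ℝ) * ‖∑ n ∈ Finset.Icc 1 N, ε n‖
        ≤ 1 / (N : ℝ) * (2 * (1 + Real.sqrt 2) * Real.sqrt N) := by
          apply mul_le_mul_of_nonneg_left hb (by positivity)
      _ = 2 * (1 + Real.sqrt 2) * (Real.sqrt N / N) := by ring
      _ = 2 * (1 + Real.sqrt 2) * (1 / Real.sqrt N) := by rw [Real.sqrt_div_self']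
      _ = 2 * (1 + Real.sqrt 2) / Real.sqrt N := by ring
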